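/- For all φ, ψ ∈ L²(μ): (i) ∫_X φ · (Q((LP)φ)) dμ = ‖(LP)φ‖²_{L²(μ)} ≥ 0, and (ii) ∫_X (Q((LP)φ)) · ψ dμ = ∫_X φ · (Q((LP)ψ)) dμ; that is, the composition Q∘LP is a nonnegative self-adjoint operator on L²(μ). -/

import Mathlib

open MeasureTheory

section AuxQLP

variable {X : Type*} [MeasurableSpace X] {μ : Measure X} {M : ℕ}

lemma aux_mul_indicator_sum (E : Fin M → Set X) (hE : ∀ m, MeasurableSet (E m))
    (c : Fin M → ℝ) (φ : X → ℝ) (hφ : ∀ m, IntegrableOn φ (E m) μ) :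
    ∫ x, φ x * (∑ m, (E m).indicator (fun _ => c m) x) ∂μ
      = ∑ m, c m * ∫ x in E m, φ x ∂μ := by
  have h1 : (fun x => φ x * ∑ m, (E m).indicator (fun _ => c m) x)
      = fun x => ∑ m, (E m).indicator (fun y => φ y * c m) x := by
    funext x
    rw [Finset.mul_sum]
    refine Finset.sum_congr rfl fun m _ => ?_
    by_cases h : x ∈ E m <;> simp [h]
  rw [h1, integral_finset_sum]
  · refine Finset.sum_congr rfl fun m _ => ?_
    rw [integral_indicator (hE m), integral_mul_const, mul_comm]
  · intro m _
    exact (integrable_indicator_iff (hE m)).2 ((hφ m).mul_const _)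

lemma aux_indicator_sum_mul (E : Fin M → Set X) (hE : ∀ m, MeasurableSet (E m))
    (c : Fin M → ℝ) (φ : X → ℝ) (hφ : ∀ m, IntegrableOn φ (E m) μ) :
    ∫ x, (∑ m, (E m).indicator (fun _ => c m) x) * φ x ∂μ
      = ∑ m, c m * ∫ x in E m, φ x ∂μ := by
  rw [← aux_mul_indicator_sum E hE c φ hφ]
  simp_rw [mul_comm]

lemma aux_setint_indicator_sum (Et : Fin M → Set X) (hEt : ∀ m, MeasurableSet (Et m))
    (hdisj : Pairwise fun i j => Disjoint (Et i) (Et j))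
    (hfin : ∀ m, μ (Et m) < ⊤) (a : Fin M → ℝ) (m : Fin M) :
    ∫ y in Et m, (∑ k, (Et k).indicator (fun _ => a k) y) ∂μ
      = a m * (μ (Et m)).toReal := by
  rw [integral_finset_sum]
  · rw [Finset.sum_eq_single m]
    · rw [integral_indicator_const _ (hEt m), measureReal_restrict_apply (hEt m),
        Set.inter_self, smul_eq_mul, mul_comm, measureReal_def]
    · intro k _ hk
      rw [integral_indicator_const _ (hEt k), measureReal_restrict_apply (hEt k),
        Set.disjoint_iff_inter_eq_empty.1 (hdisj hk), measureReal_empty]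
      simp
    · intro h; exact absurd (Finset.mem_univ m) h
  · intro k _
    refine (integrable_indicator_iff (hEt k)).2 ?_
    refine integrableOn_const ?_
    rw [Measure.restrict_apply (hEt k)]
    exact (lt_of_le_of_lt (measure_mono Set.inter_subset_right) (hfin m)).ne

lemma aux_indicator_sq (Et : Fin M → Set X)
    (hdisj : Pairwise fun i j => Disjoint (Et i) (Et j)) (a : Fin M → ℝ) (x : X) :
    (∑ k, (Et k).indicator (fun _ => a k) x) ^ 2
      = ∑ k, (Et k).indicator (fun _ => (a k) ^ 2) x := by
  by_cases h : ∃ j, x ∈ Et j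
  · obtain ⟨j, hj⟩ := h
    have hz : ∀ k, k ≠ j → x ∉ Et k := fun k hk hx =>
      Set.disjoint_left.1 (hdisj hk) hx hj
    rw [Finset.sum_eq_single j, Finset.sum_eq_single j]
    · simp [hj]
    · intro k _ hk; exact Set.indicator_of_notMem (hz k hk) _
    · intro h; exact absurd (Finset.mem_univ j) h
    · intro k _ hk; exact Set.indicator_of_notMem (hz k hk) _
    · intro h; exact absurd (Finset.mem_univ j) h
  · push_neg at h
    have hz : ∀ k (b : ℝ), (Et k).indicator (fun _ => b) x = 0 := fun k b =>
      Set.indicator_of_notMem (h k) _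
    simp [hz]

lemma aux_int_indicator_sum (Et : Fin M → Set X) (hEt : ∀ m, MeasurableSet (Et m))
    (hfin : ∀ m, μ (Et m) < ⊤) (c : Fin M → ℝ) :
    ∫ x, (∑ k, (Et k).indicator (fun _ => c k) x) ∂μ
      = ∑ k, c k * (μ (Et k)).toReal := by
  rw [integral_finset_sum]
  · refine Finset.sum_congr rfl fun k _ => ?_
    rw [integral_indicator_const _ (hEt k), smul_eq_mul, mul_comm, measureReal_def]
  · intro k _
    exact (integrable_indicator_iff (hEt k)).2 (integrableOn_const (hfin k).ne)

end AuxQLP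

/-- The composition `Q ∘ LP` is a nonnegative self-adjoint operator
on `L²(μ)`: (i) `∫ φ · Q((LP)φ) dμ = ‖(LP)φ‖²_{L²} ≥ 0` and (ii)
`∫ Q((LP)φ) · ψ dμ = ∫ φ · Q((LP)ψ) dμ` for all `φ, ψ ∈ L²(μ)`. -/
theorem QLP_nonneg_selfadjoint
    {X : Type*} [MeasurableSpace X] (μ : Measure X)
    (M : ℕ) (hM : 1 ≤ M) (E Et : Fin M → Set X)
    (hEmeas : ∀ m, MeasurableSet (E m))
    (hEtmeas : ∀ m, MeasurableSet (Et m))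
    (hEdisj : Pairwise fun i j => Disjoint (E i) (E j))
    (hEtdisj : Pairwise fun i j => Disjoint (Et i) (Et j))
    (hEpos : ∀ m, 0 < μ (E m)) (hEfin : ∀ m, μ (E m) < ⊤)
    (hsub : ∀ m, E m ⊆ Et m) (hEtfin : ∀ m, μ (Et m) < ⊤) :
    (∀ φ : X → ℝ, MemLp φ 2 μ →
      (∫ x, φ x * (∑ m : Fin M, Set.indicator (E m)
          (fun _ => (μ (E m)).toReal⁻¹ * ∫ y in Et m,
            (∑ k : Fin M, Set.indicator (Et k)
              (fun _ => (μ (E k)).toReal⁻¹ * ∫ z in E k, φ z ∂μ) y) ∂μ) x) ∂μ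
        =
       ∫ x, (∑ k : Fin M, Set.indicator (Et k)
          (fun _ => (μ (E k)).toReal⁻¹ * ∫ z in E k, φ z ∂μ) x) ^ 2 ∂μ) ∧
      0 ≤ ∫ x, φ x * (∑ m : Fin M, Set.indicator (E m)
          (fun _ => (μ (E m)).toReal⁻¹ * ∫ y in Et m,
            (∑ k : Fin M, Set.indicator (Et k)
              (fun _ => (μ (E k)).toReal⁻¹ * ∫ z in E k, φ z ∂μ) y) ∂μ) x) ∂μ) ∧
    (∀ φ ψ : X → ℝ, MemLp φ 2 μ → MemLp ψ 2 μ →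
      ∫ x, (∑ m : Fin M, Set.indicator (E m)
          (fun _ => (μ (E m)).toReal⁻¹ * ∫ y in Et m,
            (∑ k : Fin M, Set.indicator (Et k)
              (fun _ => (μ (E k)).toReal⁻¹ * ∫ z in E k, φ z ∂μ) y) ∂μ) x) * ψ x ∂μ
        =
      ∫ x, φ x * (∑ m : Fin M, Set.indicator (E m)
          (fun _ => (μ (E m)).toReal⁻¹ * ∫ y in Et m,
            (∑ k : Fin M, Set.indicator (Et k)
              (fun _ => (μ (E k)).toReal⁻¹ * ∫ z in E k, ψ z ∂μ) y) ∂μ) x) ∂μ) := by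
  have hInt : ∀ (φ : X → ℝ), MemLp φ 2 μ → ∀ (s : Set X), μ s < ⊤ → IntegrableOn φ s μ := by
    intro φ hφ s hs
    haveI := Fact.mk hs
    exact (hφ.restrict s).integrable one_le_two
  have hinner : ∀ (φ : X → ℝ) (m : Fin M),
      (∫ y in Et m, (∑ k : Fin M, Set.indicator (Et k)
        (fun _ => (μ (E k)).toReal⁻¹ * ∫ z in E k, φ z ∂μ) y) ∂μ)
      = ((μ (E m)).toReal⁻¹ * ∫ z in E m, φ z ∂μ) * (μ (Et m)).toReal := by
    intro φ m
    exact aux_setint_indicator_sum Et hEtmeas hEtdisj hEtfin _ m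
  refine ⟨?_, ?_⟩
  · intro φ hφ
    have hIntE : ∀ m, IntegrableOn φ (E m) μ := fun m => hInt φ hφ _ (hEfin m)
    have key : (∫ x, φ x * (∑ m : Fin M, Set.indicator (E m)
          (fun _ => (μ (E m)).toReal⁻¹ * ∫ y in Et m,
            (∑ k : Fin M, Set.indicator (Et k)
              (fun _ => (μ (E k)).toReal⁻¹ * ∫ z in E k, φ z ∂μ) y) ∂μ) x) ∂μ)
        = ∫ x, (∑ k : Fin M, Set.indicator (Et k)
          (fun _ => (μ (E k)).toReal⁻¹ * ∫ z in E k, φ z ∂μ) x) ^ 2 ∂μ := by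
      simp only [hinner φ]
      rw [aux_mul_indicator_sum E hEmeas _ φ hIntE]
      have hsq := aux_indicator_sq Et hEtdisj
        (fun k => (μ (E k)).toReal⁻¹ * ∫ z in E k, φ z ∂μ)
      simp only [hsq]
      rw [aux_int_indicator_sum Et hEtmeas hEtfin]
      refine Finset.sum_congr rfl fun m _ => ?_
      ring
    refine ⟨key, ?_⟩
    rw [key]
    exact integral_nonneg fun x => sq_nonneg _
  · intro φ ψ hφ hψ
    have hIntEφ : ∀ m, IntegrableOn φ (E m) μ := fun m => hInt φ hφ _ (hEfin m)
    have hIntEψ : ∀ m, IntegrableOn ψ (E m) μ := fun m => hInt ψ hψ _ (hEfin m)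
    simp only [hinner φ, hinner ψ]
    rw [aux_indicator_sum_mul E hEmeas _ ψ hIntEψ,
      aux_mul_indicator_sum E hEmeas _ φ hIntEφ]
    refine Finset.sum_congr rfl fun m _ => ?_
    ring
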